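/- Irreducibility of primitive root binomials (supporting claim behind the squared-denominator argument of Lemma 4.5): if d ∈ ℕ^N is nonzero and the greatest common divisor of its coordinates is 1, then the polynomial 1 − X^d is irreducible in ℤ[x₁,…,x_N]. (Every positive root of a reduced root system is a primitive vector in the root lattice, so each binomial 1 − e^{−β}, β ∈ Δ⁺, is irreducible, hence prime, in the ring 𝒮.) -/

import Mathlib

open MvPolynomial

/-- The binomial `b_d = 1 - X^d` in `ℤ[x₁,…,x_N]`. -/
noncomputable def bd {N : ℕ} (d : Fin N → ℕ) : MvPolynomial (Fin N) ℤ :=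
  1 - ∏ i, X i ^ d i

section Aux

open LaurentPolynomial

lemma T_sum {α : Type*} (s : Finset α) (g : α → ℤ) :
    (T (∑ i ∈ s, g i) : LaurentPolynomial ℤ) = ∏ i ∈ s, T (g i) := by
  classical
  induction s using Finset.induction_on with
  | empty => simp [T_zero]
  | insert _ _ hj ih => rw [Finset.sum_insert hj, Finset.prod_insert hj, T_add, ih]

lemma phi_monomial {N : ℕ} (c : Fin N → ℤ) (u : Fin N →₀ ℕ) (r : ℤ) :
    aeval (fun j => (T (c j) : LaurentPolynomial ℤ)) (monomial u r) =
      AddMonoidAlgebra.single (∑ i, c i * (u i : ℤ)) r := by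
  rw [aeval_monomial, single_eq_C_mul_T]
  have h1 : (u.prod fun i k => (T (c i) : LaurentPolynomial ℤ) ^ k) =
      T (∑ i, c i * (u i : ℤ)) := by
    rw [Finsupp.prod]
    have h2 : ∀ i ∈ u.support, (T (c i) : LaurentPolynomial ℤ) ^ (u i) = T ((u i : ℤ) * c i) :=
      fun i _ => T_pow (c i) (u i)
    rw [Finset.prod_congr rfl h2, ← T_sum]
    congr 1
    rw [Finset.sum_subset (Finset.subset_univ u.support)]
    · exact Finset.sum_congr rfl fun i _ => mul_comm _ _
    · intro i _ hi
      simp [Finsupp.notMem_support_iff.mp hi]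
  have h3 : (algebraMap ℤ (LaurentPolynomial ℤ)) r = LaurentPolynomial.C r := by
    simp [eq_intCast, ← LaurentPolynomial.C_eq_algebraMap]
  rw [h1, h3]

lemma phi_eq {N : ℕ} (c : Fin N → ℤ) (f : MvPolynomial (Fin N) ℤ) :
    aeval (fun j => (T (c j) : LaurentPolynomial ℤ)) f =
      ∑ u ∈ f.support, AddMonoidAlgebra.single (∑ i, c i * (u i : ℤ)) (coeff u f) := by
  conv_lhs => rw [f.as_sum, map_sum]
  exact Finset.sum_congr rfl fun u _ => phi_monomial c u (coeff u f)

lemma phi_apply_mem {N : ℕ} (c : Fin N → ℤ) (f : MvPolynomial (Fin N) ℤ)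
    (hinj : ∀ u ∈ f.support, ∀ v ∈ f.support,
      (∑ i, c i * (u i : ℤ)) = (∑ i, c i * (v i : ℤ)) → u = v)
    (u : Fin N →₀ ℕ) (hu : u ∈ f.support) :
    (aeval (fun j => (T (c j) : LaurentPolynomial ℤ)) f).coeff (∑ i, c i * (u i : ℤ)) = coeff u f := by
  rw [phi_eq, AddMonoidAlgebra.coeff_sum, Finsupp.finset_sum_apply]
  rw [Finset.sum_eq_single_of_mem u hu]
  · rw [AddMonoidAlgebra.coeff_single, Finsupp.single_apply, if_pos rfl]
  · intro v hv hvu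
    rw [AddMonoidAlgebra.coeff_single, Finsupp.single_apply, if_neg]
    intro h
    exact hvu (hinj v hv u hu h)

lemma mono_of {N : ℕ} (c : Fin N → ℤ) (f : MvPolynomial (Fin N) ℤ) (r k : ℤ) (hr : r ≠ 0)
    (hinj : ∀ u ∈ f.support, ∀ v ∈ f.support,
      (∑ i, c i * (u i : ℤ)) = (∑ i, c i * (v i : ℤ)) → u = v)
    (hf : aeval (fun j => (T (c j) : LaurentPolynomial ℤ)) f = LaurentPolynomial.C r * T k) :
    ∀ u ∈ f.support, ∀ v ∈ f.support, u = v := by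
  have key : ∀ u ∈ f.support, (∑ i, c i * (u i : ℤ)) = k := by
    intro u hu
    by_contra hne
    have h1 := phi_apply_mem c f hinj u hu
    rw [hf, ← single_eq_C_mul_T, AddMonoidAlgebra.coeff_single, Finsupp.single_apply, if_neg (fun h => hne h.symm)] at h1
    exact (mem_support_iff.mp hu) h1.symm
  intro u hu v hv
  exact hinj u hu v hv ((key u hu).trans (key v hv).symm)

lemma bez {ι : Type*} [DecidableEq ι] (dd : ι → ℕ) (s : Finset ι) :
    ∃ c : ι → ℤ, ∑ i ∈ s, c i * (dd i : ℤ) = ((s.gcd dd : ℕ) : ℤ) := by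
  induction s using Finset.induction_on with
  | empty => exact ⟨0, by simp⟩
  | @insert j s hj ih =>
    obtain ⟨c, hc⟩ := ih
    refine ⟨fun i => if i = j then Nat.gcdA (dd j) (s.gcd dd)
      else Nat.gcdB (dd j) (s.gcd dd) * c i, ?_⟩
    have hj' : (fun i => if i = j then Nat.gcdA (dd j) (s.gcd dd)
        else Nat.gcdB (dd j) (s.gcd dd) * c i) j = Nat.gcdA (dd j) (s.gcd dd) := by simp
    rw [Finset.sum_insert hj, Finset.gcd_insert, hj']
    have h1 : ∀ i ∈ s,
        (if i = j then Nat.gcdA (dd j) (s.gcd dd) else Nat.gcdB (dd j) (s.gcd dd) * c i) * (dd i : ℤ)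
          = Nat.gcdB (dd j) (s.gcd dd) * (c i * (dd i : ℤ)) := by
      intro i hi
      rw [if_neg (by rintro rfl; exact hj hi)]
      ring
    rw [Finset.sum_congr rfl h1, ← Finset.mul_sum, hc]
    have h2 : (gcd (dd j) (s.gcd dd) : ℕ) = Nat.gcd (dd j) (s.gcd dd) := rfl
    rw [h2, Nat.gcd_eq_gcd_ab (dd j) (s.gcd dd)]
    ring

lemma exists_c {N : ℕ} (dZ : Fin N → ℤ) (hdZ : dZ ≠ 0) (c₀ : Fin N → ℤ)
    (hc₀ : ∑ i, c₀ i * dZ i = 1) (D : Finset (Fin N → ℤ)) :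
    ∃ c : Fin N → ℤ, (∑ i, c i * dZ i = 1) ∧ ∀ δ ∈ D, δ ≠ 0 → (∑ i, c i * δ i) ≠ 0 := by
  classical
  induction D using Finset.induction_on with
  | empty => exact ⟨c₀, hc₀, by simp⟩
  | @insert δ D hδD ih =>
    obtain ⟨c, hc1, hc2⟩ := ih
    set A : ℤ := ∑ i, dZ i * dZ i with hA
    set B : ℤ := ∑ i, dZ i * δ i with hB
    have hApos : 0 < A := by
      obtain ⟨i0, hi0⟩ := Function.ne_iff.mp hdZ
      exact Finset.sum_pos' (fun i _ => mul_self_nonneg (dZ i))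
        ⟨i0, Finset.mem_univ i0, mul_self_pos.mpr (by simpa using hi0)⟩
    set w : Fin N → ℤ := fun i => A * δ i - B * dZ i with hw
    by_cases hw0 : w = 0
    · -- parallel case
      refine ⟨c, hc1, ?_⟩
      intro δ' hδ' hne
      rcases Finset.mem_insert.mp hδ' with rfl | hmem
      · have hpt : ∀ i, A * δ' i = B * dZ i := by
          intro i
          have := congrFun hw0 i
          simpa [hw, sub_eq_zero] using this
        have hBne : B ≠ 0 := by
          intro h0
          apply hne
          funext i
          have := hpt i
          rw [h0, zero_mul] at this
          rcases mul_eq_zero.mp this with h | h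
          · exact absurd h (ne_of_gt hApos)
          · simpa using h
        have hkey : A * (∑ i, c i * δ' i) = B := by
          rw [Finset.mul_sum]
          calc ∑ i, A * (c i * δ' i) = ∑ i, c i * (A * δ' i) := by
                exact Finset.sum_congr rfl fun i _ => by ring
            _ = ∑ i, c i * (B * dZ i) := by
                exact Finset.sum_congr rfl fun i _ => by rw [hpt i]
            _ = B * ∑ i, c i * dZ i := by
                rw [Finset.mul_sum]; exact Finset.sum_congr rfl fun i _ => by ring
            _ = B := by rw [hc1, mul_one]
        intro h0
        rw [h0, mul_zero] at hkey
        exact hBne hkey.symm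
      · exact hc2 δ' hmem hne
    · -- generic case
      have hwd : ∑ i, w i * dZ i = 0 := by
        have : ∀ i ∈ Finset.univ, w i * dZ i = A * (dZ i * δ i) - B * (dZ i * dZ i) := by
          intro i _; simp only [hw]; ring
        rw [Finset.sum_congr rfl this, Finset.sum_sub_distrib, ← Finset.mul_sum, ← Finset.mul_sum,
          ← hB, ← hA]
        ring
      have hww : ∑ i, w i * w i = A * ∑ i, w i * δ i := by
        have h1 : ∀ i ∈ Finset.univ, w i * w i = A * (w i * δ i) - B * (w i * dZ i) := by
          intro i _
          simp only [hw]
          ring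
        rw [Finset.sum_congr rfl h1, Finset.sum_sub_distrib, ← Finset.mul_sum, ← Finset.mul_sum,
          hwd, mul_zero, sub_zero]
      have hwwpos : 0 < ∑ i, w i * w i := by
        obtain ⟨i0, hi0⟩ := Function.ne_iff.mp hw0
        exact Finset.sum_pos' (fun i _ => mul_self_nonneg (w i))
          ⟨i0, Finset.mem_univ i0, mul_self_pos.mpr hi0⟩
      have hwδpos : 0 < ∑ i, w i * δ i := by nlinarith [hww, hwwpos, hApos]
      set M : ℕ := (insert δ D).sup fun δ'' => (∑ i, c i * δ'' i).natAbs with hM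
      set t : ℤ := 1 + (M : ℤ) with ht
      have htpos : 0 < t := by positivity
      refine ⟨fun i => c i + t * w i, ?_, ?_⟩
      · have : ∀ i ∈ Finset.univ, (c i + t * w i) * dZ i = c i * dZ i + t * (w i * dZ i) := by
          intro i _; ring
        rw [Finset.sum_congr rfl this, Finset.sum_add_distrib, ← Finset.mul_sum, hwd, mul_zero,
          add_zero, hc1]
      · intro δ' hδ' hne
        have hsplit : ∑ i, (c i + t * w i) * δ' i = (∑ i, c i * δ' i) + t * (∑ i, w i * δ' i) := by
          rw [Finset.mul_sum, ← Finset.sum_add_distrib]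
          exact Finset.sum_congr rfl fun i _ => by ring
        by_cases hzero : ∑ i, w i * δ' i = 0
        · rw [hsplit, hzero, mul_zero, add_zero]
          rcases Finset.mem_insert.mp hδ' with rfl | hmem
          · exact absurd hzero (ne_of_gt hwδpos)
          · exact hc2 δ' hmem hne
        · have hb : ((∑ i, c i * δ' i).natAbs : ℤ) ≤ (M : ℤ) :=
            Nat.cast_le.mpr (Finset.le_sup (f := fun δ'' => (∑ i, c i * δ'' i).natAbs) hδ')
          have habs : |∑ i, c i * δ' i| < t := by
            rw [ht, Int.abs_eq_natAbs]
            linarith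
          have hS : 1 ≤ |∑ i, w i * δ' i| := Int.one_le_abs (by exact_mod_cast hzero)
          rw [hsplit]
          intro h0
          have h1 : |∑ i, c i * δ' i| = |t * (∑ i, w i * δ' i)| := by
            rw [show (∑ i, c i * δ' i) = -(t * (∑ i, w i * δ' i)) from by linarith, abs_neg]
          rw [abs_mul, abs_of_pos htpos] at h1
          nlinarith

lemma laurent_unit_form (p : LaurentPolynomial ℤ) (n : ℕ) (B : Polynomial ℤ)
    (hB : Polynomial.toLaurent B = p * T n) (K : ℕ) (hdvd : B ∣ Polynomial.X ^ K) :
    ∃ r k, r ≠ 0 ∧ p = LaurentPolynomial.C r * T k := by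
  obtain ⟨i, _, u, hu⟩ := (dvd_prime_pow Polynomial.prime_X K).mp hdvd
  obtain ⟨r, hru, hCr⟩ := Polynomial.isUnit_iff.mp u⁻¹.isUnit
  have hBe : B = Polynomial.C r * Polynomial.X ^ i := by
    have h1 : B = Polynomial.X ^ i * (↑u⁻¹ : Polynomial ℤ) := by
      rw [← hu]
      exact (Units.mul_inv_cancel_right B u).symm
    rw [h1, hCr, mul_comm]
  have h2 : p * T n = LaurentPolynomial.C r * T i := by
    rw [← hB, hBe, Polynomial.toLaurent_C_mul_X_pow]
  refine ⟨r, (i : ℤ) + -(n : ℤ), hru.ne_zero, ?_⟩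
  have h3 : p = p * T n * T (-n) := by
    rw [mul_T_assoc, add_neg_cancel, T_zero, mul_one]
  rw [h3, h2, mul_T_assoc]

lemma isUnit_of_mono {N : ℕ} (d : Fin N → ℕ) (hd : d ≠ 0) (f g : MvPolynomial (Fin N) ℤ)
    (h : bd d = f * g) (hm : ∀ u ∈ f.support, ∀ v ∈ f.support, u = v) : IsUnit f := by
  classical
  have hcc : constantCoeff (bd d) = 1 := by
    rw [bd, map_sub, map_one, map_prod]
    obtain ⟨i0, hi0⟩ := Function.ne_iff.mp hd
    have hi0' : d i0 ≠ 0 := by simpa using hi0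
    rw [Finset.prod_eq_zero (Finset.mem_univ i0)]
    · ring
    · rw [map_pow, constantCoeff_X, zero_pow hi0']
  have h1 : constantCoeff f * constantCoeff g = 1 := by rw [← map_mul, ← h, hcc]
  have hu : IsUnit (constantCoeff f) := IsUnit.of_mul_eq_one _ h1
  have h0mem : (0 : Fin N →₀ ℕ) ∈ f.support := by
    rw [mem_support_iff]
    exact hu.ne_zero
  have hsupp : f.support = {0} :=
    Finset.eq_singleton_iff_unique_mem.mpr ⟨h0mem, fun u hu' => hm u hu' 0 h0mem⟩
  have hf : f = MvPolynomial.C (constantCoeff f) := by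
    rw [MvPolynomial.C_apply]
    conv_lhs => rw [f.as_sum]
    rw [hsupp, Finset.sum_singleton]
    rfl
  rw [hf]
  exact hu.map MvPolynomial.C

/-- if `d ∈ ℕ^N` is nonzero and the gcd of its coordinates is `1`,
then the binomial `1 - X^d` is irreducible in `ℤ[x₁,…,x_N]`. -/
theorem primitive_root_binomial_irreducible
    {N : ℕ} (d : Fin N → ℕ) (hd : d ≠ 0)
    (hgcd : Finset.univ.gcd d = 1) :
    Irreducible (bd d) := by
  classical
  constructor
  · intro hu
    have h1 : IsUnit (eval (fun _ => (1 : ℤ)) (bd d)) := hu.map _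
    rw [bd, map_sub, map_one, map_prod] at h1
    simp only [map_pow, eval_X, one_pow, Finset.prod_const_one, sub_self] at h1
    exact not_isUnit_zero h1
  · rintro a b h
    set dZ : Fin N → ℤ := fun i => (d i : ℤ) with hdZdef
    have hdZ : dZ ≠ 0 := by
      intro h0
      apply hd
      funext i
      have := congrFun h0 i
      simpa [hdZdef] using this
    obtain ⟨c₀, hc₀⟩ := bez d Finset.univ
    rw [hgcd] at hc₀
    set S : Finset (Fin N →₀ ℕ) := a.support ∪ b.support with hS
    set D : Finset (Fin N → ℤ) :=
      (S ×ˢ S).image (fun p i => ((p.1 i : ℤ) - (p.2 i : ℤ))) with hD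
    obtain ⟨c, hc1, hc2⟩ := exists_c dZ hdZ c₀ (by exact_mod_cast hc₀) D
    have hinjS : ∀ u ∈ S, ∀ v ∈ S,
        (∑ i, c i * (u i : ℤ)) = (∑ i, c i * (v i : ℤ)) → u = v := by
      intro u hu v hv heq
      by_contra hne
      have hδD : (fun i => ((u i : ℤ) - v i)) ∈ D :=
        Finset.mem_image.mpr ⟨(u, v), Finset.mem_product.mpr ⟨hu, hv⟩, rfl⟩
      have hδne : (fun i => ((u i : ℤ) - v i)) ≠ 0 := by
        intro h0
        apply hne
        ext i
        have := congrFun h0 i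
        simp only [Pi.zero_apply, sub_eq_zero] at this
        exact_mod_cast this
      apply hc2 _ hδD hδne
      have : ∑ i, c i * ((u i : ℤ) - v i)
          = (∑ i, c i * (u i : ℤ)) - ∑ i, c i * (v i : ℤ) := by
        rw [← Finset.sum_sub_distrib]
        exact Finset.sum_congr rfl fun i _ => by ring
      rw [this, heq, sub_self]
    have hinja : ∀ u ∈ a.support, ∀ v ∈ a.support,
        (∑ i, c i * (u i : ℤ)) = (∑ i, c i * (v i : ℤ)) → u = v := fun u hu v hv =>
      hinjS u (Finset.mem_union_left _ hu) v (Finset.mem_union_left _ hv)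
    have hinjb : ∀ u ∈ b.support, ∀ v ∈ b.support,
        (∑ i, c i * (u i : ℤ)) = (∑ i, c i * (v i : ℤ)) → u = v := fun u hu v hv =>
      hinjS u (Finset.mem_union_right _ hu) v (Finset.mem_union_right _ hv)
    have hφbd : aeval (fun j => (T (c j) : LaurentPolynomial ℤ)) (bd d) = 1 - T 1 := by
      rw [bd, map_sub, map_one, map_prod]
      have hterm : ∀ i ∈ (Finset.univ : Finset (Fin N)),
          aeval (fun j => (T (c j) : LaurentPolynomial ℤ)) ((X i : MvPolynomial (Fin N) ℤ) ^ d i) = T ((d i : ℤ) * c i) := by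
        intro i _
        rw [map_pow, aeval_X, T_pow]
      rw [Finset.prod_congr rfl hterm, ← T_sum]
      have hsum : ∑ i, (d i : ℤ) * c i = 1 := by
        rw [← hc1]
        exact Finset.sum_congr rfl fun i _ => mul_comm _ _
      rw [hsum]
    have hab : aeval (fun j => (T (c j) : LaurentPolynomial ℤ)) a *
        aeval (fun j => (T (c j) : LaurentPolynomial ℤ)) b = 1 - T 1 := by
      rw [← map_mul, ← h, hφbd]
    obtain ⟨n, A, hA⟩ := (aeval (fun j => (T (c j) : LaurentPolynomial ℤ)) a).exists_T_pow
    obtain ⟨m, B, hB⟩ := (aeval (fun j => (T (c j) : LaurentPolynomial ℤ)) b).exists_T_pow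
    have hAB : A * B = (1 - Polynomial.X) * Polynomial.X ^ (n + m) := by
      apply Polynomial.toLaurent_injective
      rw [map_mul, hA, hB, map_mul, map_sub, map_one, Polynomial.toLaurent_X,
        Polynomial.toLaurent_X_pow]
      have : (aeval (fun j => (T (c j) : LaurentPolynomial ℤ)) a * T n) *
          (aeval (fun j => (T (c j) : LaurentPolynomial ℤ)) b * T m)
          = (aeval (fun j => (T (c j) : LaurentPolynomial ℤ)) a *
             aeval (fun j => (T (c j) : LaurentPolynomial ℤ)) b) * (T (n : ℤ) * T (m : ℤ)) := by
        ring
      rw [this, hab, ← T_add]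
      norm_cast
    have hprime : Prime (Polynomial.X - Polynomial.C (1 : ℤ)) := Polynomial.prime_X_sub_C 1
    have hdvd : (Polynomial.X - Polynomial.C (1 : ℤ)) ∣ A * B :=
      ⟨-Polynomial.X ^ (n + m), by rw [hAB, Polynomial.C_1]; ring⟩
    rcases hprime.2.2 _ _ hdvd with hdA | hdB
    · -- (X - 1) ∣ A  ⇒  B ∣ X^(n+m) ⇒ b is a monomial ⇒ b unit
      right
      obtain ⟨A₁, hA1⟩ := hdA
      have hcancel : B ∣ Polynomial.X ^ (n + m) := by
        refine ⟨-A₁, ?_⟩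
        apply mul_left_cancel₀ hprime.ne_zero
        rw [show (Polynomial.X - Polynomial.C (1 : ℤ)) * (B * -A₁)
            = -(((Polynomial.X - Polynomial.C 1) * A₁) * B) from by ring, ← hA1, hAB,
          Polynomial.C_1]
        ring
      obtain ⟨r, k, hr, hφb⟩ := laurent_unit_form _ m B hB (n + m) hcancel
      exact isUnit_of_mono d hd b a (by rw [h, mul_comm])
        (mono_of c b r k hr hinjb hφb)
    · -- (X - 1) ∣ B ⇒ a is a monomial ⇒ a unit
      left
      obtain ⟨B₁, hB1⟩ := hdB
      have hcancel : A ∣ Polynomial.X ^ (n + m) := by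
        refine ⟨-B₁, ?_⟩
        apply mul_left_cancel₀ hprime.ne_zero
        rw [show (Polynomial.X - Polynomial.C (1 : ℤ)) * (A * -B₁)
            = -(A * ((Polynomial.X - Polynomial.C 1) * B₁)) from by ring, ← hB1, hAB,
          Polynomial.C_1]
        ring
      obtain ⟨r, k, hr, hφa⟩ := laurent_unit_form _ n A hA (n + m) hcancel
      exact isUnit_of_mono d hd a b h (mono_of c a r k hr hinja hφa)

end Aux
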